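/- Let t ≥ 1 and let c_I : U → ℂ, for multi-indices I with |I| ≤ t−1, be functions differentiable at u₀, and define B : U → ℂ^{N+1} by B(u) := ∑_{|I|≤t−1} c_I(u) x̂^I(u), a differentiable map into the affine cone over the osculating variety Tan^{t−1}(V). Then for every w ∈ ℂ^k the derivative DB(u₀)(w) lies in T^(t)(u₀); i.e., the tangent cone (hence the tangent space) to Tan^{t−1}(V) at the point P is contained in the t-th osculating space T̃^(t)_P(V). -/

import Mathlib

/- Common setup: iterated partial derivatives, multi-indices, osculating spaces,
fundamental forms for a local parametrisation `x : ℂ^k → ℂ^N` of a variety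
`V ⊂ ℙ^N`, lifted to `x̂ = (1, x) : ℂ^k → ℂ^{N+1}`. -/

open scoped BigOperators

noncomputable section

/-- Iterated partial derivative of `f` along a list of coordinate directions. -/
def pderivList {k : ℕ} {E : Type} [NormedAddCommGroup E] [NormedSpace ℂ E] :
    List (Fin k) → ((Fin k → ℂ) → E) → ((Fin k → ℂ) → E)
  | [], f => f
  | j :: L, f => fun u => fderiv ℂ (pderivList L f) u (Pi.single j 1)

/-- The canonical list of coordinate directions attached to a multi-index `I : Fin k → ℕ`
(the direction `j` repeated `I j` times). -/
def idxList {k : ℕ} (I : Fin k → ℕ) : List (Fin k) :=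
  (List.finRange k).flatMap fun j => List.replicate (I j) j

/-- The partial derivative `∂^I f = ∂^{|I|} f / ∂u₁^{i₁} ⋯ ∂u_k^{i_k}`. -/
def pd {k : ℕ} {E : Type} [NormedAddCommGroup E] [NormedSpace ℂ E]
    (I : Fin k → ℕ) (f : (Fin k → ℂ) → E) : (Fin k → ℂ) → E :=
  pderivList (idxList I) f

/-- The finset of multi-indices `I : Fin k → ℕ` of total degree `|I| ≤ r`. -/
def degLE (k r : ℕ) : Finset (Fin k → ℕ) :=
  (Finset.Iic fun _ : Fin k => r).filter fun I => (∑ j, I j) ≤ r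

/-- The finset of multi-indices `I : Fin k → ℕ` of total degree `|I| = r`. -/
def degEq (k r : ℕ) : Finset (Fin k → ℕ) :=
  (Finset.Iic fun _ : Fin k => r).filter fun I => (∑ j, I j) = r

/-- The lift `x̂(u) = (1, x(u))` of the parametrisation `x` to the affine cone `ℂ^{N+1}`. -/
def coneLift {k N : ℕ} (x : (Fin k → ℂ) → (Fin N → ℂ)) : (Fin k → ℂ) → (Fin (N + 1) → ℂ) :=
  fun u => Fin.cons 1 (x u)

/-- `osc x̂ s u` is the affine cone `T^(s)(u)` over the `s`-th osculating space at the point of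
parameter `u`: the span of all partial derivatives `x̂^I(u)` with `|I| ≤ s`. -/
def osc {k N : ℕ} (xhat : (Fin k → ℂ) → (Fin (N + 1) → ℂ)) (s : ℕ) (u : Fin k → ℂ) :
    Submodule ℂ (Fin (N + 1) → ℂ) :=
  Submodule.span ℂ {y | ∃ I : Fin k → ℕ, (∑ j, I j) ≤ s ∧ y = pd I xhat u}

/-- The degree-`r` form `F^r_ξ(v) = ξ(D^r x̂(u₀)(v,…,v))`, as a function of `v ∈ ℂ^k`. -/
def formOf {k N : ℕ} (xhat : (Fin k → ℂ) → (Fin (N + 1) → ℂ)) (u₀ : Fin k → ℂ) (r : ℕ)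
    (ξ : Module.Dual ℂ (Fin (N + 1) → ℂ)) : (Fin k → ℂ) → ℂ :=
  fun v => ξ (iteratedFDeriv ℂ r xhat u₀ fun _ => v)

/-- The `r`-th fundamental form `|I^r|` of `V` at `P`, as the set of the forms `F^r_ξ` for `ξ`
a linear functional vanishing on `T^(r-1)(u₀)`. -/
def fundSet {k N : ℕ} (xhat : (Fin k → ℂ) → (Fin (N + 1) → ℂ)) (u₀ : Fin k → ℂ) (r : ℕ) :
    Set ((Fin k → ℂ) → ℂ) :=
  { F | ∃ ξ : Module.Dual ℂ (Fin (N + 1) → ℂ),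
      (∀ y ∈ osc xhat (r - 1) u₀, ξ y = 0) ∧ F = formOf xhat u₀ r ξ }

/-- The `r`-th fundamental form `|I^r|` as a subspace of the space of functions of `v`. -/
def fundForm {k N : ℕ} (xhat : (Fin k → ℂ) → (Fin (N + 1) → ℂ)) (u₀ : Fin k → ℂ) (r : ℕ) :
    Submodule ℂ ((Fin k → ℂ) → ℂ) :=
  Submodule.span ℂ (fundSet xhat u₀ r)

/-- The linear map sending the coefficients `(E_I)_{|I|=t}` of a degree-`t` form to
`∑_{|I|=t} E_I x̂^I(u₀) ∈ ℂ^{N+1}`; a form is the symbol of a Laplace equation of order `t`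
iff its coefficients are mapped into `T^(t-1)(u₀)`. -/
def symbolMap {k N : ℕ} (xhat : (Fin k → ℂ) → (Fin (N + 1) → ℂ)) (u₀ : Fin k → ℂ) (t : ℕ) :
    ({I : Fin k → ℕ // I ∈ degEq k t} → ℂ) →ₗ[ℂ] (Fin (N + 1) → ℂ) where
  toFun E := ∑ I : {I : Fin k → ℕ // I ∈ degEq k t}, E I • pd I.1 xhat u₀
  map_add' a b := by simp [add_smul, Finset.sum_add_distrib]
  map_smul' c a := by simp [smul_smul, Finset.smul_sum]

/-- The parametrisation `Φ_t(u, λ) = ∑_{|I| ≤ t} λ_I x̂^I(u)` of the affine cone over the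
`t`-th osculating variety `Tan^t(V)`. -/
def tanPhi {k N : ℕ} (xhat : (Fin k → ℂ) → (Fin (N + 1) → ℂ)) (t : ℕ) :
    ((Fin k → ℂ) × ({I : Fin k → ℕ // I ∈ degLE k t} → ℂ)) → (Fin (N + 1) → ℂ) :=
  fun p => ∑ I : {I : Fin k → ℕ // I ∈ degLE k t}, p.2 I • pd I.1 xhat p.1

/-- The rank of the Jacobian matrix of a linear system `S` of degree-`r` forms:
the maximum over `v ∈ ℂ^k` of the dimension of the span of the gradients at `v`
of the members of `S`. -/
def jacRank (k : ℕ) (S : Set ((Fin k → ℂ) → ℂ)) : ℕ :=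
  sSup {r : ℕ | ∃ v : Fin k → ℂ,
    r = Module.finrank ℂ
      ↥(Submodule.span ℂ {g : Fin k → ℂ | ∃ F ∈ S, g = fun j => pd (Pi.single j 1) F v})}

/-- The coefficients of the reducible degree-`(t+1)` form
`(∑_j w_j v_j) · (∑_{|I| = t} λ_I v^I)`. -/
def prodSymb {k : ℕ} (t : ℕ) (w : Fin k → ℂ) (lam : {I : Fin k → ℕ // I ∈ degLE k t} → ℂ)
    (J : Fin k → ℕ) : ℂ :=
  ∑ j : Fin k,
    if h : 1 ≤ J j ∧ (J - Pi.single j 1 : Fin k → ℕ) ∈ degLE k t ∧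
        (∑ i, (J - Pi.single j 1 : Fin k → ℕ) i) = t
    then w j * lam ⟨(J - Pi.single j 1 : Fin k → ℕ), h.2.1⟩ else 0


section AuxLemmas

variable {k : ℕ} {E : Type} [NormedAddCommGroup E] [NormedSpace ℂ E]
variable {U : Set (Fin k → ℂ)}

lemma contDiffOn_pderivList (hU : IsOpen U) (L : List (Fin k)) {f : (Fin k → ℂ) → E}
    (hf : ContDiffOn ℂ (⊤ : ℕ∞) f U) : ContDiffOn ℂ (⊤ : ℕ∞) (pderivList L f) U := by
  induction L with
  | nil => exact hf
  | cons j L ih =>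
    have h1 : ContDiffOn ℂ (⊤ : ℕ∞) (fderiv ℂ (pderivList L f)) U :=
      ((contDiffOn_infty_iff_fderiv_of_isOpen hU).1 ih).2
    exact h1.clm_apply contDiffOn_const

lemma pderivList_swap (hU : IsOpen U) (a b : Fin k) (L : List (Fin k)) {f : (Fin k → ℂ) → E}
    (hf : ContDiffOn ℂ (⊤ : ℕ∞) f U) :
    ∀ u ∈ U, pderivList (a :: b :: L) f u = pderivList (b :: a :: L) f u := by
  intro u hu
  set g := pderivList L f with hg
  have hgs : ContDiffOn ℂ (⊤ : ℕ∞) g U := contDiffOn_pderivList hU L hf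
  have hgat : ContDiffAt ℂ (⊤ : ℕ∞) g u := hgs.contDiffAt (hU.mem_nhds hu)
  have hsymm : IsSymmSndFDerivAt ℂ g u := hgat.isSymmSndFDerivAt (by simp only [minSmoothness_of_isRCLikeNormedField]; exact WithTop.coe_le_coe.2 le_top)
  have key : ∀ c d : Fin k,
      pderivList (c :: d :: L) f u = fderiv ℂ (fderiv ℂ g) u (Pi.single c 1) (Pi.single d 1) := by
    intro c d
    have hdiff : DifferentiableAt ℂ (fderiv ℂ g) u := by
      have : ContDiffAt ℂ (⊤ : ℕ∞) (fderiv ℂ g) u :=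
        (((contDiffOn_infty_iff_fderiv_of_isOpen hU).1 hgs).2).contDiffAt (hU.mem_nhds hu)
      exact this.differentiableAt (by norm_cast)
    have heq : (fun v => pderivList (d :: L) f v)
        = fun v => (ContinuousLinearMap.apply ℂ E (Pi.single d 1)) (fderiv ℂ g v) := rfl
    show fderiv ℂ (fun v => pderivList (d :: L) f v) u (Pi.single c 1) = _
    rw [heq]
    have hcomp := (((ContinuousLinearMap.apply ℂ E (Pi.single d 1)).hasFDerivAt).comp u
      hdiff.hasFDerivAt).fderiv
    rw [show (fun v => (ContinuousLinearMap.apply ℂ E (Pi.single d 1)) (fderiv ℂ g v))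
        = (ContinuousLinearMap.apply ℂ E (Pi.single d 1)) ∘ (fderiv ℂ g) from rfl, hcomp]
    rfl
  rw [key a b, key b a, hsymm.eq]

lemma pderivList_perm (hU : IsOpen U) {L₁ L₂ : List (Fin k)} (hp : L₁.Perm L₂)
    {f : (Fin k → ℂ) → E} (hf : ContDiffOn ℂ (⊤ : ℕ∞) f U) :
    ∀ u ∈ U, pderivList L₁ f u = pderivList L₂ f u := by
  induction hp with
  | nil => intro u _; rfl
  | cons a h ih =>
    intro u hu
    have h' : pderivList _ f =ᶠ[nhds u] pderivList _ f :=
      Filter.eventuallyEq_of_mem (hU.mem_nhds hu) (fun v hv => ih v hv)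
    simp only [pderivList, h'.fderiv_eq]
  | swap a b L => exact fun u hu => pderivList_swap hU b a L hf u hu
  | trans h1 h2 ih1 ih2 => exact fun u hu => (ih1 u hu).trans (ih2 u hu)

lemma count_idxList (I : Fin k → ℕ) (a : Fin k) : (idxList I).count a = I a := by
  unfold idxList
  rw [List.count_flatMap]
  have h : ((List.finRange k).map (List.count a ∘ fun j => List.replicate (I j) j)).sum
      = ∑ j : Fin k, if j = a then I j else 0 := by
    rw [Fin.sum_univ_def]
    congr 1
    apply List.map_congr_left
    intro j _
    simp [List.count_replicate]
  rw [h, Finset.sum_ite_eq' Finset.univ a I]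
  simp

lemma idxList_perm_cons (I : Fin k → ℕ) (j : Fin k) :
    (idxList (I + Pi.single j 1)).Perm (j :: idxList I) := by
  rw [List.perm_iff_count]
  intro a
  rw [count_idxList, List.count_cons, count_idxList]
  by_cases h : a = j
  · simp [h, Pi.single_apply]
  · simp [h, Pi.single_apply, Ne.symm h]

lemma fderiv_pd (hU : IsOpen U) {f : (Fin k → ℂ) → E} (hf : ContDiffOn ℂ (⊤ : ℕ∞) f U)
    (I : Fin k → ℕ) (j : Fin k) {u : Fin k → ℂ} (hu : u ∈ U) :
    fderiv ℂ (pd I f) u (Pi.single j 1) = pd (I + Pi.single j 1) f u := by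
  have h1 : fderiv ℂ (pd I f) u (Pi.single j 1) = pderivList (j :: idxList I) f u := rfl
  rw [h1]
  exact (pderivList_perm hU (idxList_perm_cons I j) hf u hu).symm

lemma differentiableAt_pd (hU : IsOpen U) {f : (Fin k → ℂ) → E}
    (hf : ContDiffOn ℂ (⊤ : ℕ∞) f U) (I : Fin k → ℕ) {u : Fin k → ℂ} (hu : u ∈ U) :
    DifferentiableAt ℂ (pd I f) u :=
  ((contDiffOn_pderivList hU (idxList I) hf).contDiffAt (hU.mem_nhds hu)).differentiableAt
    (by norm_cast)

lemma contDiffOn_coneLift {N : ℕ} {x : (Fin k → ℂ) → (Fin N → ℂ)}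
    (hx : ContDiffOn ℂ (⊤ : ℕ∞) x U) : ContDiffOn ℂ (⊤ : ℕ∞) (coneLift x) U := by
  apply contDiffOn_pi.2
  intro i
  refine Fin.cases ?_ (fun i => ?_) i
  · simpa [coneLift] using (contDiffOn_const : ContDiffOn ℂ (⊤ : ℕ∞) (fun _ => (1:ℂ)) U)
  · simpa [coneLift] using (contDiffOn_pi.1 hx) i

end AuxLemmas


/-- The tangent cone to the osculating variety `Tan^{t-1}(V)` at `P` is contained in the
`t`-th osculating space: the derivative of any differentiable map
`B(u) = ∑_{|I| ≤ t-1} c_I(u) x̂^I(u)` at `u₀` lands in `T^(t)(u₀)`. -/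
theorem deriv_of_osculating_section_mem_osc (k N t : ℕ) (hk : 1 ≤ k) (hN : 1 ≤ N) (ht : 1 ≤ t)
    (U : Set (Fin k → ℂ)) (hU : IsOpen U) (u₀ : Fin k → ℂ) (hu₀ : u₀ ∈ U)
    (x : (Fin k → ℂ) → (Fin N → ℂ)) (hx : ContDiffOn ℂ (⊤ : ℕ∞) x U)
    (c : (Fin k → ℕ) → (Fin k → ℂ) → ℂ)
    (hc : ∀ I : Fin k → ℕ, (∑ j, I j) ≤ t - 1 → DifferentiableAt ℂ (c I) u₀) :
    ∀ w : Fin k → ℂ,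
      fderiv ℂ (fun u => ∑ I ∈ degLE k (t - 1), c I u • pd I (coneLift x) u) u₀ w ∈
        osc (coneLift x) t u₀ := by
  intro w
  set xh := coneLift x with hxh
  have hxhs : ContDiffOn ℂ (⊤ : ℕ∞) xh U := contDiffOn_coneLift hx
  have hmem : ∀ I ∈ degLE k (t - 1), (∑ j, I j) ≤ t - 1 := by
    intro I hI; exact (Finset.mem_filter.1 hI).2
  have hterm : ∀ I ∈ degLE k (t - 1),
      HasFDerivAt (fun u => c I u • pd I xh u)
        (c I u₀ • fderiv ℂ (pd I xh) u₀ + (fderiv ℂ (c I) u₀).smulRight (pd I xh u₀)) u₀ :=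
    fun I hI => ((hc I (hmem I hI)).hasFDerivAt).smul
      (differentiableAt_pd hU hxhs I hu₀).hasFDerivAt
  have hsum := HasFDerivAt.fun_sum hterm
  rw [hsum.fderiv]
  simp only [ContinuousLinearMap.coe_sum', Finset.sum_apply, ContinuousLinearMap.add_apply,
    ContinuousLinearMap.coe_smul', Pi.smul_apply, ContinuousLinearMap.smulRight_apply]
  apply Submodule.sum_mem
  intro I hI
  apply Submodule.add_mem
  · apply Submodule.smul_mem
    have hw : w = ∑ j : Fin k, w j • (Pi.single j 1 : Fin k → ℂ) := by
      funext a
      simp [Finset.sum_apply, Pi.single_apply, Finset.sum_ite_eq]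
    rw [hw, map_sum]
    apply Submodule.sum_mem
    intro j _
    rw [map_smul]
    apply Submodule.smul_mem
    rw [fderiv_pd hU hxhs I j hu₀]
    apply Submodule.subset_span
    refine ⟨(I + Pi.single j 1 : Fin k → ℕ), ?_, rfl⟩
    have hs : ∑ i, (I + Pi.single j 1 : Fin k → ℕ) i = (∑ i, I i) + 1 := by
      simp [Finset.sum_add_distrib, Finset.sum_pi_single]
    rw [hs]
    have := hmem I hI
    omega
  · apply Submodule.smul_mem
    apply Submodule.subset_span
    exact ⟨I, le_trans (hmem I hI) (Nat.sub_le t 1), rfl⟩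


end
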